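/- Under the same definitions (a a root of 6a³ − 18a² + 9a − 1 = 0, u = a(γ−1)+1 ≠ 0, a ≠ 0, and p₂, p₃, p₄, p₅ as above), the weights satisfy p₄ + p₅ = 1/3. -/
import Mathlib


theorem p4_p5_third (a γ u : ℝ) (hu : u = a*(γ-1)+1) (hu0 : u ≠ 0)
    (ha0 : a ≠ 0) (ha : 6*a^3 - 18*a^2 + 9*a - 1 = 0) :
    (-6*a^2 + 2*a*(γ+5) - 1)/(6*u) + (2*a^2 - 4*a + 1)/(2*u) = 1/3 := by
  subst hu
  field_simp
  ring_nf
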